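/- The function k(x,t;x′,t′) = √(2π) · exp(−(x−x′)²/(2(1+2(t+t′)))) / √(1+2(t+t′)) satisfies the heat equation in the first pair of arguments: ∂ₓ²k = ∂ₜk, for all (x,t,x′,t′) with t + t′ > −1/2. -/

import Mathlib

open Real

/-- The EPGP covariance function of the 1D heat equation. -/
noncomputable def heatKernel (x t x' t' : ℝ) : ℝ :=
  Real.sqrt (2 * Real.pi) * Real.exp (-(x - x') ^ 2 / (2 * (1 + 2 * (t + t')))) /
    Real.sqrt (1 + 2 * (t + t'))

/-- The EPGP heat kernel satisfies the heat equation ∂ₓ²k = ∂ₜk in the first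
    pair of arguments, whenever t + t' > −1/2. -/
theorem heatKernel_satisfies_heat_equation (x t x' t' : ℝ) (h : t + t' > -1/2) :
    deriv (deriv (fun y : ℝ => heatKernel y t x' t')) x
      = deriv (fun s : ℝ => heatKernel x s x' t') t := by
  have hc : (0:ℝ) < 1 + 2 * (t + t') := by linarith
  set A := Real.sqrt (2 * Real.pi) with hA
  set c := 1 + 2 * (t + t') with hcdef
  have hcne : c ≠ 0 := hc.ne'
  have hs : Real.sqrt c ≠ 0 := (Real.sqrt_pos.2 hc).ne'
  -- exponent derivative (spatial), at an arbitrary point y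
  have hexp : ∀ y : ℝ, HasDerivAt (fun y : ℝ => -(y - x') ^ 2 / (2 * c)) (-(y - x') / c) y := by
    intro y
    have h0 := (((hasDerivAt_id y).sub_const x').pow 2).neg.div_const (2 * c)
    refine h0.congr_deriv ?_
    simp only [id]
    field_simp
    ring
  -- first spatial derivative
  have hd1 : ∀ y : ℝ, HasDerivAt (fun y : ℝ => heatKernel y t x' t')
      (A * (Real.exp (-(y - x') ^ 2 / (2 * c)) * (-(y - x') / c)) / Real.sqrt c) y :=
    fun y => (((hexp y).exp).const_mul A).div_const (Real.sqrt c)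
  have hderiv1 : deriv (fun y : ℝ => heatKernel y t x' t')
      = fun y => A * Real.exp (-(y - x') ^ 2 / (2 * c)) * (-(y - x') / c) / Real.sqrt c :=
    funext fun y => by rw [(hd1 y).deriv]; ring
  rw [hderiv1]
  -- second spatial derivative
  have hnum : HasDerivAt (fun y : ℝ => A * Real.exp (-(y - x') ^ 2 / (2 * c)))
      (A * (Real.exp (-(x - x') ^ 2 / (2 * c)) * (-(x - x') / c))) x :=
    (hexp x).exp.const_mul A
  have hlin : HasDerivAt (fun y : ℝ => -(y - x') / c) (-1 / c) x :=
    ((hasDerivAt_id x).sub_const x').neg.div_const c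
  have hd2 : HasDerivAt
      (fun y => A * Real.exp (-(y - x') ^ 2 / (2 * c)) * (-(y - x') / c) / Real.sqrt c)
      ((A * (Real.exp (-(x - x') ^ 2 / (2 * c)) * (-(x - x') / c)) * (-(x - x') / c)
        + A * Real.exp (-(x - x') ^ 2 / (2 * c)) * (-1 / c)) / Real.sqrt c) x := by
    have h0 := (hnum.mul hlin).div_const (Real.sqrt c)
    exact h0
  rw [hd2.deriv]
  -- time derivative
  have hu : HasDerivAt (fun s : ℝ => 1 + 2 * (s + t')) 2 t := by
    have h0 := (((hasDerivAt_id t).add_const t').const_mul 2).const_add 1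
    refine h0.congr_deriv ?_
    norm_num
  have hu2 : HasDerivAt (fun s : ℝ => 2 * (1 + 2 * (s + t'))) 4 t := by
    have h0 := hu.const_mul 2
    refine h0.congr_deriv ?_
    norm_num
  have htexp : HasDerivAt (fun s : ℝ => -(x - x') ^ 2 / (2 * (1 + 2 * (s + t'))))
      ((x - x') ^ 2 / c ^ 2) t := by
    have h0 := (hasDerivAt_const t (-(x - x') ^ 2)).div hu2
      (by rw [← hcdef]; positivity)
    refine h0.congr_deriv ?_
    rw [← hcdef]
    field_simp
    ring
  have htnum : HasDerivAt (fun s : ℝ => A * Real.exp (-(x - x') ^ 2 / (2 * (1 + 2 * (s + t')))))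
      (A * (Real.exp (-(x - x') ^ 2 / (2 * c)) * ((x - x') ^ 2 / c ^ 2))) t :=
    htexp.exp.const_mul A
  have hden : HasDerivAt (fun s : ℝ => Real.sqrt (1 + 2 * (s + t')))
      (2 / (2 * Real.sqrt c)) t :=
    hu.sqrt (by rw [← hcdef]; exact hcne)
  have htd : HasDerivAt (fun s : ℝ => heatKernel x s x' t')
      ((A * (Real.exp (-(x - x') ^ 2 / (2 * c)) * ((x - x') ^ 2 / c ^ 2)) * Real.sqrt c
        - A * Real.exp (-(x - x') ^ 2 / (2 * c)) * (2 / (2 * Real.sqrt c))) / Real.sqrt c ^ 2)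
      t :=
    htnum.div hden hs
  rw [htd.deriv]
  -- algebraic identity
  have hr2 : Real.sqrt c * Real.sqrt c = c := Real.mul_self_sqrt hc.le
  set r := Real.sqrt c with hrdef
  rw [← hr2]
  field_simp
  ring
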